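/- For finite random variables U^N, W^m, Y^n with U^N i.i.d. and independent of Y^n: I(U^N; W^m | Y^n) ≥ Σ_{i=1}^N I(U_i; (W^m, Y^n)). -/

import Mathlib

open MeasureTheory ProbabilityTheory Real

/-- Shannon entropy (in bits) of a finite-valued random variable. -/
noncomputable def ent {Ω S : Type*} [MeasurableSpace Ω] [Fintype S]
    (μ : Measure Ω) (X : Ω → S) : ℝ :=
  ∑ s : S, -((μ (X ⁻¹' {s})).toReal * Real.logb 2 (μ (X ⁻¹' {s})).toReal)

/-- Conditional Shannon entropy H(X|Y) = H(X,Y) - H(Y). -/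
noncomputable def condEnt {Ω S T : Type*} [MeasurableSpace Ω] [Fintype S] [Fintype T]
    (μ : Measure Ω) (X : Ω → S) (Y : Ω → T) : ℝ :=
  ent μ (fun ω => (X ω, Y ω)) - ent μ Y

/-- Mutual information I(X;Y) = H(X) + H(Y) - H(X,Y). -/
noncomputable def mutInf {Ω S T : Type*} [MeasurableSpace Ω] [Fintype S] [Fintype T]
    (μ : Measure Ω) (X : Ω → S) (Y : Ω → T) : ℝ :=
  ent μ X + ent μ Y - ent μ (fun ω => (X ω, Y ω))

/-- Conditional mutual information I(X;Y|Z) = H(X|Z) - H(X|Y,Z). -/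
noncomputable def condMutInf {Ω S T R : Type*} [MeasurableSpace Ω] [Fintype S] [Fintype T]
    [Fintype R] (μ : Measure Ω) (X : Ω → S) (Y : Ω → T) (Z : Ω → R) : ℝ :=
  condEnt μ X Z - condEnt μ X (fun ω => (Y ω, Z ω))

/-- `Y` is conditionally independent of `Z` given `X` (elementwise form). -/
def CondIndepGiven {Ω A B C : Type*} [MeasurableSpace Ω]
    (μ : Measure Ω) (Y : Ω → A) (Z : Ω → B) (X : Ω → C) : Prop :=
  ∀ (a : A) (b : B) (c : C),
    μ {ω | Y ω = a ∧ Z ω = b ∧ X ω = c} * μ {ω | X ω = c} =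
      μ {ω | Y ω = a ∧ X ω = c} * μ {ω | Z ω = b ∧ X ω = c}

/-! ### Auxiliary development -/

section Aux

/-- entropy of a pmf given as a function -/
noncomputable def Hf {S : Type*} [Fintype S] (f : S → ℝ) : ℝ :=
  ∑ s, -(f s * Real.logb 2 (f s))

/-- pmf of a finite random variable -/
noncomputable def pm {Ω S : Type*} [MeasurableSpace Ω] (μ : Measure Ω) (X : Ω → S) : S → ℝ :=
  fun s => (μ (X ⁻¹' {s})).toReal

lemma Hf_equiv {S T : Type*} [Fintype S] [Fintype T] (e : S ≃ T) (f : T → ℝ) :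
    Hf (fun s => f (e s)) = Hf f :=
  e.sum_comp (fun t => -(f t * Real.logb 2 (f t)))

lemma Hf_prod {S T : Type*} [Fintype S] [Fintype T] (f : S → ℝ) (g : T → ℝ)
    (hf : ∀ s, 0 ≤ f s) (hg : ∀ t, 0 ≤ g t)
    (hfs : ∑ s, f s = 1) (hgs : ∑ t, g t = 1) :
    Hf (fun p : S × T => f p.1 * g p.2) = Hf f + Hf g := by
  unfold Hf
  rw [Fintype.sum_prod_type]
  have key : ∀ s t, -(f s * g t * logb 2 (f s * g t)) =
      -(f s * logb 2 (f s)) * g t + f s * -(g t * logb 2 (g t)) := by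
    intro s t
    rcases eq_or_lt_of_le (hf s) with h | h
    · simp [← h]
    rcases eq_or_lt_of_le (hg t) with h' | h'
    · simp [← h']
    rw [Real.logb_mul h.ne' h'.ne']
    ring
  calc ∑ s, ∑ t, -(f s * g t * logb 2 (f s * g t))
      = ∑ s, ∑ t, (-(f s * logb 2 (f s)) * g t + f s * -(g t * logb 2 (g t))) := by
        refine Finset.sum_congr rfl fun s _ => Finset.sum_congr rfl fun t _ => key s t
    _ = ∑ s, (-(f s * logb 2 (f s)) * (∑ t, g t) + f s * ∑ t, -(g t * logb 2 (g t))) := by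
        refine Finset.sum_congr rfl fun s _ => ?_
        rw [Finset.sum_add_distrib, ← Finset.mul_sum, ← Finset.mul_sum]
    _ = _ := by
        rw [Finset.sum_add_distrib]
        simp [hgs, ← Finset.sum_mul, hfs]

lemma sum_pi_prod {A : Type*} [Fintype A] :
    ∀ {n : ℕ} (f : Fin n → A → ℝ),
      ∑ v : Fin n → A, ∏ i, f i (v i) = ∏ i, ∑ a, f i a := by
  intro n
  induction n with
  | zero => intro f; simp
  | succ n ih =>
    intro f
    have he := (Fin.consEquiv (fun _ : Fin (n+1) => A)).sum_comp
      (fun v : Fin (n+1) → A => ∏ i, f i (v i))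
    rw [← he, Fintype.sum_prod_type]
    have : ∀ (a : A) (w : Fin n → A),
        ∏ i, f i ((Fin.consEquiv (fun _ : Fin (n+1) => A)) (a, w) i)
          = f 0 a * ∏ i, f i.succ (w i) := by
      intro a w
      rw [Fin.prod_univ_succ]
      simp [Fin.consEquiv]
    calc ∑ a, ∑ w : Fin n → A, ∏ i, f i ((Fin.consEquiv fun _ => A) (a, w) i)
        = ∑ a, ∑ w : Fin n → A, f 0 a * ∏ i, f i.succ (w i) := by
          exact Finset.sum_congr rfl fun a _ => Finset.sum_congr rfl fun w _ => this a w
      _ = (∑ a, f 0 a) * ∑ w : Fin n → A, ∏ i, f i.succ (w i) := by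
          rw [Finset.sum_mul]
          exact Finset.sum_congr rfl fun a _ => (Finset.mul_sum _ _ _).symm
      _ = ∏ i, ∑ a, f i a := by
          rw [ih (fun i => f i.succ), Fin.prod_univ_succ]

lemma Hf_pi {A : Type*} [Fintype A] :
    ∀ {n : ℕ} (f : Fin n → A → ℝ), (∀ i a, 0 ≤ f i a) → (∀ i, ∑ a, f i a = 1) →
      Hf (fun u : Fin n → A => ∏ i, f i (u i)) = ∑ i, Hf (f i) := by
  intro n
  induction n with
  | zero =>
    intro f _ _
    simp [Hf]
  | succ n ih =>
    intro f hf hf1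
    have he := Hf_equiv (Fin.consEquiv (fun _ : Fin (n+1) => A))
      (fun u : Fin (n+1) → A => ∏ i, f i (u i))
    rw [← he]
    have hfun : (fun p : A × (Fin n → A) =>
        (fun u : Fin (n+1) → A => ∏ i, f i (u i)) ((Fin.consEquiv fun _ => A) p))
        = fun p : A × (Fin n → A) => f 0 p.1 * ∏ i, f i.succ (p.2 i) := by
      funext p
      obtain ⟨a, w⟩ := p
      show ∏ i, f i ((Fin.consEquiv fun _ : Fin (n+1) => A) (a, w) i)
        = f 0 a * ∏ i, f i.succ (w i)
      rw [Fin.prod_univ_succ]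
      simp [Fin.consEquiv]
    rw [hfun, Hf_prod (f 0) (fun w : Fin n → A => ∏ i, f i.succ (w i)) (hf 0)
      (fun w => Finset.prod_nonneg fun i _ => hf _ _) (hf1 0)
      (by rw [sum_pi_prod]; exact Finset.prod_eq_one fun i _ => hf1 _),
      ih (fun i => f i.succ) (fun i a => hf _ _) (fun i => hf1 _), Fin.sum_univ_succ]

/-- The key analytic inequality: nonnegativity of conditional mutual information,
    at the level of joint pmfs. -/
lemma triple_ineq {X Z V : Type*} [Fintype X] [Fintype Z] [Fintype V]
    (p : X → Z → V → ℝ) (hp : ∀ x z v, 0 ≤ p x z v)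
    (hs : ∑ x, ∑ z, ∑ v, p x z v = 1) :
    (∑ x, ∑ z, ∑ v, -(p x z v * logb 2 (p x z v))) +
      (∑ v, -((∑ x, ∑ z, p x z v) * logb 2 (∑ x, ∑ z, p x z v))) ≤
    (∑ x, ∑ v, -((∑ z, p x z v) * logb 2 (∑ z, p x z v))) +
      (∑ z, ∑ v, -((∑ x, p x z v) * logb 2 (∑ x, p x z v))) := by
  have hl2 : (0:ℝ) < Real.log 2 := Real.log_pos one_lt_two
  set A : V → ℝ := fun v => ∑ x, ∑ z, p x z v with hA
  set B : X → V → ℝ := fun x v => ∑ z, p x z v with hB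
  set C : Z → V → ℝ := fun z v => ∑ x, p x z v with hC
  have hAnn : ∀ v, 0 ≤ A v := fun v =>
    Finset.sum_nonneg fun x _ => Finset.sum_nonneg fun z _ => hp x z v
  have hBnn : ∀ x v, 0 ≤ B x v := fun x v => Finset.sum_nonneg fun z _ => hp x z v
  have hCnn : ∀ z v, 0 ≤ C z v := fun z v => Finset.sum_nonneg fun x _ => hp x z v
  set Q : X → Z → V → ℝ := fun x z v => if A v = 0 then 0 else B x v * C z v / A v with hQ
  have key : ∀ x z v, p x z v * (logb 2 (B x v) + logb 2 (C z v)
      - logb 2 (p x z v) - logb 2 (A v)) ≤ (Q x z v - p x z v) / Real.log 2 := by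
    intro x z v
    rcases eq_or_lt_of_le (hp x z v) with h0 | h0
    · rw [← h0]
      simp only [zero_mul, sub_zero]
      apply div_nonneg _ hl2.le
      simp only [hQ]
      split
      · exact le_refl 0
      · exact div_nonneg (mul_nonneg (hBnn x v) (hCnn z v)) (hAnn v)
    · have hpB : p x z v ≤ B x v := Finset.single_le_sum (fun z _ => hp x z v) (Finset.mem_univ z)
      have hpC : p x z v ≤ C z v := Finset.single_le_sum (fun x _ => hp x z v) (Finset.mem_univ x)
      have hBA : B x v ≤ A v := Finset.single_le_sum (fun x _ => hBnn x v) (Finset.mem_univ x)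
      have hBpos : 0 < B x v := lt_of_lt_of_le h0 hpB
      have hCpos : 0 < C z v := lt_of_lt_of_le h0 hpC
      have hApos : 0 < A v := lt_of_lt_of_le hBpos hBA
      have hQv : Q x z v = B x v * C z v / A v := by simp [hQ, hApos.ne']
      have hQpos : 0 < Q x z v := by rw [hQv]; positivity
      have hlog : logb 2 (B x v) + logb 2 (C z v) - logb 2 (p x z v) - logb 2 (A v)
          = Real.log (Q x z v / p x z v) / Real.log 2 := by
        rw [hQv, Real.log_div (by positivity) h0.ne',
          Real.log_div (by positivity) hApos.ne', Real.log_mul hBpos.ne' hCpos.ne']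
        simp only [Real.logb]
        ring
      rw [hlog]
      have hle : Real.log (Q x z v / p x z v) ≤ Q x z v / p x z v - 1 :=
        Real.log_le_sub_one_of_pos (by positivity)
      have h1 : p x z v * (Real.log (Q x z v / p x z v) / Real.log 2)
          ≤ p x z v * ((Q x z v / p x z v - 1) / Real.log 2) := by
        gcongr
      refine h1.trans_eq ?_
      field_simp
  have hAsum : ∑ v, A v = 1 := by
    have h1 : ∑ v, ∑ x, ∑ z, p x z v = ∑ x, ∑ v, ∑ z, p x z v := Finset.sum_comm
    have h2 : ∀ x, ∑ v : V, ∑ z : Z, p x z v = ∑ z, ∑ v, p x z v := fun x => Finset.sum_comm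
    rw [hA] at *
    rw [h1, ← hs]
    exact Finset.sum_congr rfl fun x _ => h2 x
  have hQsum : ∑ x, ∑ z, ∑ v, Q x z v = 1 := by
    calc ∑ x, ∑ z, ∑ v, Q x z v = ∑ v, ∑ x, ∑ z, Q x z v := by
          rw [show ∑ x, ∑ z, ∑ v, Q x z v = ∑ x, ∑ v, ∑ z, Q x z v from
            Finset.sum_congr rfl fun x _ => Finset.sum_comm]
          exact Finset.sum_comm
      _ = ∑ v, A v := by
          refine Finset.sum_congr rfl fun v _ => ?_
          by_cases hAv : A v = 0
          · simp [hQ, hAv]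
          · simp only [hQ, if_neg hAv]
            have hBsum : ∑ x, B x v = A v := rfl
            have hCsum : ∑ z, C z v = A v := Finset.sum_comm
            calc ∑ x, ∑ z, B x v * C z v / A v
                = ∑ x, B x v * ((∑ z, C z v) / A v) := by
                  refine Finset.sum_congr rfl fun x _ => ?_
                  simp only [mul_div_assoc]
                  rw [← Finset.mul_sum, Finset.sum_div]
              _ = (∑ x, B x v) * ((∑ z, C z v) / A v) := by rw [Finset.sum_mul]
              _ = A v := by rw [hBsum, hCsum]; field_simp
      _ = 1 := hAsum
  have main : ∑ x, ∑ z, ∑ v, p x z v * (logb 2 (B x v) + logb 2 (C z v)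
      - logb 2 (p x z v) - logb 2 (A v)) ≤ 0 := by
    calc ∑ x, ∑ z, ∑ v, p x z v * (logb 2 (B x v) + logb 2 (C z v)
          - logb 2 (p x z v) - logb 2 (A v))
        ≤ ∑ x, ∑ z, ∑ v, (Q x z v - p x z v) / Real.log 2 := by
          refine Finset.sum_le_sum fun x _ => Finset.sum_le_sum fun z _ =>
            Finset.sum_le_sum fun v _ => key x z v
      _ = ((∑ x, ∑ z, ∑ v, Q x z v) - ∑ x, ∑ z, ∑ v, p x z v) / Real.log 2 := by
          simp only [← Finset.sum_div, ← Finset.sum_sub_distrib]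
      _ = 0 := by rw [hQsum, hs]; simp
  have eqB : ∑ x, ∑ v, -(B x v * logb 2 (B x v))
      = ∑ x, ∑ z, ∑ v, -(p x z v * logb 2 (B x v)) := by
    refine Finset.sum_congr rfl fun x _ => ?_
    rw [Finset.sum_comm]
    refine Finset.sum_congr rfl fun v _ => ?_
    rw [hB, Finset.sum_mul, ← Finset.sum_neg_distrib]
  have eqC : ∑ z, ∑ v, -(C z v * logb 2 (C z v))
      = ∑ x, ∑ z, ∑ v, -(p x z v * logb 2 (C z v)) := by
    have h1 : ∑ z, ∑ v, -(C z v * logb 2 (C z v))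
        = ∑ z, ∑ v, ∑ x, -(p x z v * logb 2 (C z v)) := by
      refine Finset.sum_congr rfl fun z _ => Finset.sum_congr rfl fun v _ => ?_
      rw [hC, Finset.sum_mul, ← Finset.sum_neg_distrib]
    rw [h1, show ∑ z, ∑ v, ∑ x, -(p x z v * logb 2 (C z v))
        = ∑ z, ∑ x, ∑ v, -(p x z v * logb 2 (C z v)) from
      Finset.sum_congr rfl fun z _ => Finset.sum_comm]
    exact Finset.sum_comm
  have eqA : ∑ v, -(A v * logb 2 (A v))
      = ∑ x, ∑ z, ∑ v, -(p x z v * logb 2 (A v)) := by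
    have h1 : ∑ v, -(A v * logb 2 (A v))
        = ∑ v, ∑ x, ∑ z, -(p x z v * logb 2 (A v)) := by
      refine Finset.sum_congr rfl fun v _ => ?_
      rw [hA, Finset.sum_mul, ← Finset.sum_neg_distrib]
      exact Finset.sum_congr rfl fun x _ => by rw [Finset.sum_mul, ← Finset.sum_neg_distrib]
    rw [h1, show ∑ v, ∑ x, ∑ z, -(p x z v * logb 2 (A v))
        = ∑ x, ∑ v, ∑ z, -(p x z v * logb 2 (A v)) from Finset.sum_comm]
    exact Finset.sum_congr rfl fun x _ => Finset.sum_comm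
  rw [eqA, eqB, eqC]
  have expand : ∑ x, ∑ z, ∑ v, p x z v * (logb 2 (B x v) + logb 2 (C z v)
      - logb 2 (p x z v) - logb 2 (A v))
      = ((∑ x, ∑ z, ∑ v, -(p x z v * logb 2 (p x z v)))
        + (∑ x, ∑ z, ∑ v, -(p x z v * logb 2 (A v))))
        - ((∑ x, ∑ z, ∑ v, -(p x z v * logb 2 (B x v)))
        + (∑ x, ∑ z, ∑ v, -(p x z v * logb 2 (C z v)))) := by
    simp only [← Finset.sum_add_distrib, ← Finset.sum_sub_distrib]
    refine Finset.sum_congr rfl fun x _ => Finset.sum_congr rfl fun z _ =>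
      Finset.sum_congr rfl fun v _ => by ring
  linarith [expand ▸ main]

section Meas
variable {Ω : Type*} [MeasurableSpace Ω]
variable {S T : Type*} [Fintype S] [MeasurableSpace S] [MeasurableSingletonClass S]
variable [Fintype T] [MeasurableSpace T] [MeasurableSingletonClass T]

set_option linter.unusedSectionVars false

lemma pm_nonneg (μ : Measure Ω) (X : Ω → S) (s : S) : 0 ≤ pm μ X s := ENNReal.toReal_nonneg

lemma pm_congr {μ : Measure Ω} {X : Ω → S} {Y : Ω → T} {s : S} {t : T}
    (h : ∀ ω, X ω = s ↔ Y ω = t) : pm μ X s = pm μ Y t := by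
  unfold pm
  have : X ⁻¹' {s} = Y ⁻¹' {t} := by ext ω; simpa using h ω
  rw [this]

lemma measure_fin_union (μ : Measure Ω) {s : T → Set Ω}
    (hd : ∀ i j, i ≠ j → Disjoint (s i) (s j)) (hm : ∀ i, MeasurableSet (s i)) :
    μ (⋃ t, s t) = ∑ t, μ (s t) := by
  rw [measure_iUnion (fun i j hij => hd i j hij) hm, tsum_fintype]

lemma pm_sum_one (μ : Measure Ω) [IsProbabilityMeasure μ] {X : Ω → S} (hX : Measurable X) :
    ∑ s, pm μ X s = 1 := by
  unfold pm
  rw [← ENNReal.toReal_sum (by intro a _; exact measure_ne_top μ _)]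
  have h2 : ∑ s, μ (X ⁻¹' {s}) = μ Set.univ := by
    rw [← measure_fin_union μ (s := fun s => X ⁻¹' {s}) ?_
      (fun s => hX (measurableSet_singleton s))]
    · congr 1; ext ω; simp
    · intro i j hij
      refine Set.disjoint_left.2 (fun ω h1 h2 => hij ?_)
      simp only [Set.mem_preimage, Set.mem_singleton_iff] at h1 h2
      exact h1.symm.trans h2
  simp [h2]

/-- marginalization -/
lemma pm_fst (μ : Measure Ω) [IsProbabilityMeasure μ] {X : Ω → S} {Y : Ω → T}
    (hX : Measurable X) (hY : Measurable Y) (s : S) :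
    pm μ X s = ∑ t, pm μ (fun ω => (X ω, Y ω)) (s, t) := by
  unfold pm
  rw [← ENNReal.toReal_sum (by intro a _; exact measure_ne_top μ _)]
  congr 1
  have h1 : X ⁻¹' {s} = ⋃ t, (fun ω => (X ω, Y ω)) ⁻¹' {(s, t)} := by
    ext ω; simp [Prod.ext_iff]
  rw [h1, measure_fin_union μ ?_ (fun t => (hX.prodMk hY) (measurableSet_singleton _))]
  intro i j hij
  refine Set.disjoint_left.2 (fun ω h1 h2 => hij ?_)
  simp only [Set.mem_preimage, Set.mem_singleton_iff, Prod.ext_iff] at h1 h2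
  exact h1.2.symm.trans h2.2

lemma ent_eq_Hf (μ : Measure Ω) (X : Ω → S) : ent μ X = Hf (pm μ X) := rfl

lemma ent_comp_equiv (μ : Measure Ω) (X : Ω → S) (e : S ≃ T) :
    ent μ (fun ω => e (X ω)) = ent μ X := by
  unfold ent
  rw [← e.sum_comp (fun t => -((μ ((fun ω => e (X ω)) ⁻¹' {t})).toReal *
    Real.logb 2 (μ ((fun ω => e (X ω)) ⁻¹' {t})).toReal))]
  refine Finset.sum_congr rfl fun s _ => ?_
  have : (fun ω => e (X ω)) ⁻¹' {e s} = X ⁻¹' {s} := by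
    ext ω; simp
  rw [this]

lemma ent_congr {μ : Measure Ω} {X Y : Ω → S} (h : ∀ ω, X ω = Y ω) : ent μ X = ent μ Y := by
  have : X = Y := funext h
  rw [this]

lemma pm_pair_indep (μ : Measure Ω) [IsProbabilityMeasure μ] {X : Ω → S} {Y : Ω → T}
    (h : IndepFun X Y μ) (s : S) (t : T) :
    pm μ (fun ω => (X ω, Y ω)) (s, t) = pm μ X s * pm μ Y t := by
  unfold pm
  have hpre : (fun ω => (X ω, Y ω)) ⁻¹' {(s, t)} = X ⁻¹' {s} ∩ Y ⁻¹' {t} := by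
    ext ω; simp [Prod.ext_iff]
  rw [hpre, h.measure_inter_preimage_eq_mul {s} {t} (measurableSet_singleton s)
    (measurableSet_singleton t), ENNReal.toReal_mul]

/-- entropy of an independent pair -/
lemma ent_pair_indep (μ : Measure Ω) [IsProbabilityMeasure μ] {X : Ω → S} {Y : Ω → T}
    (hX : Measurable X) (hY : Measurable Y) (h : IndepFun X Y μ) :
    ent μ (fun ω => (X ω, Y ω)) = ent μ X + ent μ Y := by
  rw [ent_eq_Hf, ent_eq_Hf, ent_eq_Hf]
  have : pm μ (fun ω => (X ω, Y ω)) = fun p : S × T => pm μ X p.1 * pm μ Y p.2 := by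
    funext p
    cases p with
    | mk s t => exact pm_pair_indep μ h s t
  rw [this]
  exact Hf_prod _ _ (pm_nonneg μ X) (pm_nonneg μ Y) (pm_sum_one μ hX) (pm_sum_one μ hY)

end Meas

section Vec
variable {Ω : Type*} [MeasurableSpace Ω]
variable {A : Type*} [Fintype A] [MeasurableSpace A] [MeasurableSingletonClass A]

set_option linter.unusedSectionVars false

lemma pm_vec (μ : Measure Ω) [IsProbabilityMeasure μ] {N : ℕ} {U : Fin N → Ω → A}
    (hindep : iIndepFun U μ) (u : Fin N → A) :
    pm μ (fun ω i => U i ω) u = ∏ i, pm μ (U i) (u i) := by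
  unfold pm
  have hpre : (fun ω (i : Fin N) => U i ω) ⁻¹' {u} = ⋂ i, U i ⁻¹' {u i} := by
    ext ω
    simp [funext_iff]
  rw [hpre, hindep.meas_iInter (fun i => ⟨{u i}, measurableSet_singleton _, rfl⟩),
    ENNReal.toReal_prod]

/-- entropy of an independent vector is the sum of entropies -/
lemma ent_vec_indep (μ : Measure Ω) [IsProbabilityMeasure μ] {N : ℕ} {U : Fin N → Ω → A}
    (hU : ∀ i, Measurable (U i))
    (hindep : iIndepFun U μ) :
    ent μ (fun ω i => U i ω) = ∑ i, ent μ (U i) := by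
  rw [ent_eq_Hf]
  have : pm μ (fun ω i => U i ω) = fun u : Fin N → A => ∏ i, pm μ (U i) (u i) :=
    funext (pm_vec μ hindep)
  rw [this, Hf_pi (fun i => pm μ (U i)) (fun i => pm_nonneg μ (U i))
    (fun i => pm_sum_one μ (hU i))]
  rfl

end Vec

section Subadd
variable {Ω : Type*} [MeasurableSpace Ω]
variable {S T R : Type*} [Fintype S] [MeasurableSpace S] [MeasurableSingletonClass S]
variable [Fintype T] [MeasurableSpace T] [MeasurableSingletonClass T]
variable [Fintype R] [MeasurableSpace R] [MeasurableSingletonClass R]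

set_option linter.unusedSectionVars false

/-- Subadditivity of conditional entropy: H(X,Z,V) + H(V) ≤ H(X,V) + H(Z,V). -/
lemma ent_subadd (μ : Measure Ω) [IsProbabilityMeasure μ]
    {X : Ω → S} {Z : Ω → T} {V : Ω → R}
    (hX : Measurable X) (hZ : Measurable Z) (hV : Measurable V) :
    ent μ (fun ω => (X ω, Z ω, V ω)) + ent μ V ≤
      ent μ (fun ω => (X ω, V ω)) + ent μ (fun ω => (Z ω, V ω)) := by
  set p : S → T → R → ℝ := fun x z v => pm μ (fun ω => (X ω, Z ω, V ω)) (x, z, v) with hp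
  have htriple : Measurable (fun ω => (X ω, Z ω, V ω)) := hX.prodMk (hZ.prodMk hV)
  have hpnn : ∀ x z v, 0 ≤ p x z v := fun x z v => pm_nonneg _ _ _
  have hpsum : ∑ x, ∑ z, ∑ v, p x z v = 1 := by
    have := pm_sum_one μ htriple
    rw [Fintype.sum_prod_type] at this
    rw [← this]
    exact Finset.sum_congr rfl fun x _ => (Fintype.sum_prod_type (fun y : T × R => p x y.1 y.2)).symm
  -- marginals
  have hBm : ∀ x v, pm μ (fun ω => (X ω, V ω)) (x, v) = ∑ z, p x z v := by
    intro x v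
    rw [pm_fst μ (hX.prodMk hV) hZ (x, v)]
    exact Finset.sum_congr rfl fun z _ => pm_congr (by intro ω; simp [Prod.ext_iff]; tauto)
  have hCm : ∀ z v, pm μ (fun ω => (Z ω, V ω)) (z, v) = ∑ x, p x z v := by
    intro z v
    rw [pm_fst μ (hZ.prodMk hV) hX (z, v)]
    exact Finset.sum_congr rfl fun x _ => pm_congr (by intro ω; simp [Prod.ext_iff]; tauto)
  have hAm : ∀ v, pm μ V v = ∑ x, ∑ z, p x z v := by
    intro v
    rw [pm_fst μ hV (hX.prodMk hZ) v, Fintype.sum_prod_type]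
    exact Finset.sum_congr rfl fun x _ => Finset.sum_congr rfl fun z _ =>
      pm_congr (by intro ω; simp [Prod.ext_iff]; tauto)
  have e1 : ent μ (fun ω => (X ω, Z ω, V ω))
      = ∑ x, ∑ z, ∑ v, -(p x z v * logb 2 (p x z v)) := by
    rw [ent_eq_Hf]
    unfold Hf
    rw [Fintype.sum_prod_type]
    exact Finset.sum_congr rfl fun x _ => Fintype.sum_prod_type _
  have e2 : ent μ V = ∑ v, -((∑ x, ∑ z, p x z v) * logb 2 (∑ x, ∑ z, p x z v)) := by
    rw [ent_eq_Hf]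
    unfold Hf
    exact Finset.sum_congr rfl fun v _ => by rw [hAm v]
  have e3 : ent μ (fun ω => (X ω, V ω))
      = ∑ x, ∑ v, -((∑ z, p x z v) * logb 2 (∑ z, p x z v)) := by
    rw [ent_eq_Hf]
    unfold Hf
    rw [Fintype.sum_prod_type]
    exact Finset.sum_congr rfl fun x _ => Finset.sum_congr rfl fun v _ => by rw [hBm x v]
  have e4 : ent μ (fun ω => (Z ω, V ω))
      = ∑ z, ∑ v, -((∑ x, p x z v) * logb 2 (∑ x, p x z v)) := by
    rw [ent_eq_Hf]
    unfold Hf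
    rw [Fintype.sum_prod_type]
    exact Finset.sum_congr rfl fun z _ => Finset.sum_congr rfl fun v _ => by rw [hCm z v]
  rw [e1, e2, e3, e4]
  exact triple_ineq p hpnn hpsum

end Subadd

section VecSubadd
variable {Ω : Type*} [MeasurableSpace Ω]
variable {A G : Type*} [Fintype A] [MeasurableSpace A] [MeasurableSingletonClass A]
variable [Fintype G] [MeasurableSpace G] [MeasurableSingletonClass G]

set_option linter.unusedSectionVars false

lemma ent_vec_pair_le (μ : Measure Ω) [IsProbabilityMeasure μ] :
    ∀ (n : ℕ) (U : Fin n → Ω → A), (∀ i, Measurable (U i)) →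
      ∀ (V : Ω → G), Measurable V →
      ent μ (fun ω => ((fun i => U i ω), V ω)) + (n : ℝ) * ent μ V ≤
        (∑ i, ent μ (fun ω => (U i ω, V ω))) + ent μ V := by
  intro n
  induction n with
  | zero =>
    intro U hU V hV
    let e : (Fin 0 → A) × G ≃ G :=
      ⟨fun p => p.2, fun g => (fun i => i.elim0, g), fun p => by
        ext i
        · exact i.elim0
        · rfl, fun g => rfl⟩
    have h1 : ent μ (fun ω => ((fun i => U i ω), V ω)) = ent μ V := by
      rw [← ent_comp_equiv μ V e.symm]
      exact ent_congr fun ω => Prod.ext (Subsingleton.elim _ _) rfl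
    rw [h1]
    simp
  | succ n ih =>
    intro U hU V hV
    set Zv : Ω → (Fin n → A) := fun ω i => U i.succ ω with hZv
    have hZm : Measurable Zv := measurable_pi_lambda _ fun i => hU i.succ
    -- identify the (n+1)-vector pair with the triple (U 0, Zv, V)
    let e : A × ((Fin n → A) × G) ≃ (Fin (n+1) → A) × G :=
      (Equiv.prodAssoc A (Fin n → A) G).symm.trans
        (Equiv.prodCongr (Fin.consEquiv fun _ => A) (Equiv.refl G))
    have h1 : ent μ (fun ω => ((fun i => U i ω), V ω))
        = ent μ (fun ω => (U 0 ω, Zv ω, V ω)) := by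
      rw [← ent_comp_equiv μ (fun ω => (U 0 ω, Zv ω, V ω)) e]
      refine ent_congr fun ω => Prod.ext ?_ rfl
      exact (Fin.cons_self_tail (fun i => U i ω)).symm
    have step := ent_subadd μ (hU 0) hZm hV
    have ihs := ih (fun i => U i.succ) (fun i => hU i.succ) V hV
    rw [h1, Fin.sum_univ_succ]
    push_cast
    have hZpair : ent μ (fun ω => (Zv ω, V ω)) + (n : ℝ) * ent μ V ≤
        (∑ i : Fin n, ent μ (fun ω => (U i.succ ω, V ω))) + ent μ V := ihs
    linarith

end VecSubadd

end Aux

/-- Single-letterization of the compressibility converse: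
I(Uᴺ; Wᵐ | Yⁿ) ≥ ∑ᵢ I(Uᵢ; (Wᵐ,Yⁿ)) when Uᴺ is i.i.d. and independent of Yⁿ. -/
theorem condMutInf_single_letter {Ω A B G : Type*} [MeasurableSpace Ω]
    [Fintype A] [MeasurableSpace A] [MeasurableSingletonClass A]
    [Fintype B] [MeasurableSpace B] [MeasurableSingletonClass B]
    [Fintype G] [MeasurableSpace G] [MeasurableSingletonClass G]
    {N : ℕ} (μ : Measure Ω) [IsProbabilityMeasure μ]
    (U : Fin N → Ω → A) (W : Ω → B) (Yv : Ω → G)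
    (hUmeas : ∀ i, Measurable (U i)) (hWmeas : Measurable W) (hYmeas : Measurable Yv)
    (hindep : iIndepFun U μ)
    (hid : ∀ i j, IdentDistrib (U i) (U j) μ μ)
    (hUY : IndepFun (fun ω i => U i ω) Yv μ) :
    ∑ i, mutInf μ (U i) (fun ω => (W ω, Yv ω)) ≤
      condMutInf μ (fun ω i => U i ω) W Yv := by
  have hUvec : Measurable (fun ω (i : Fin N) => U i ω) :=
    measurable_pi_lambda _ hUmeas
  have hVmeas : Measurable (fun ω => (W ω, Yv ω)) := hWmeas.prodMk hYmeas
  -- H(U^N, Y) = H(U^N) + H(Y)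
  have f1 : ent μ (fun ω => ((fun i => U i ω), Yv ω))
      = ent μ (fun ω (i : Fin N) => U i ω) + ent μ Yv :=
    ent_pair_indep μ hUvec hYmeas hUY
  -- H(U^N) = ∑ H(U_i)
  have f2 : ent μ (fun ω (i : Fin N) => U i ω) = ∑ i, ent μ (U i) :=
    ent_vec_indep μ hUmeas hindep
  -- subadditivity
  have f3 := ent_vec_pair_le μ N U hUmeas (fun ω => (W ω, Yv ω)) hVmeas
  -- expand sums of mutInf
  have f4 : ∑ i, mutInf μ (U i) (fun ω => (W ω, Yv ω))
      = (∑ i, ent μ (U i)) + (N : ℝ) * ent μ (fun ω => (W ω, Yv ω))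
        - ∑ i, ent μ (fun ω => (U i ω, (W ω, Yv ω))) := by
    unfold mutInf
    rw [Finset.sum_sub_distrib, Finset.sum_add_distrib]
    simp [Finset.sum_const, Finset.card_univ, mul_comm]
  unfold condMutInf condEnt
  rw [f1, f2]
  rw [f4]
  have f3' : ent μ (fun ω => ((fun i => U i ω), (W ω, Yv ω)))
      + (N : ℝ) * ent μ (fun ω => (W ω, Yv ω)) ≤
      (∑ i, ent μ (fun ω => (U i ω, (W ω, Yv ω)))) + ent μ (fun ω => (W ω, Yv ω)) := f3
  linarith
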